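/- arXiv:2505.11123 — 5 statements merged into one kernel-verified Lean document; each statement's English description precedes it below -/
import Mathlib

section
/- Let d be a positive integer, let Z be a measurable space with a probability measure q, and for a fixed generative condition c let p(·|z,c) be probability density functions on ℝ^d (measurable jointly in (x,z)) and u(·|z,c) : ℝ^d → ℝ^d bounded measurable conditional vector fields. Define the marginal density p(x|c) := ∫_Z p(x|z,c) dq(z) and assume p(x|c) > 0 for all x ∈ ℝ^d, and define the marginal vector field u(x|c) := (∫_Z u(x|z,c) p(x|z,c) dq(z)) / p(x|c). Then for every bounded measurable vector field v : ℝ^d → ℝ^d, the difference ∫_{ℝ^d} ‖v(x) − u(x|c)‖² p(x|c) dx − ∫_Z ∫_{ℝ^d} ‖v(x) − u(x|z,c)‖² p(x|z,c) dx dq(z) equals ∫_{ℝ^d} ‖u(x|c)‖² p(x|c) dx − ∫_Z ∫_{ℝ^d} ‖u(x|z,c)‖² p(x|z,c) dx dq(z); in particular, the marginal flow-matching objective and the conditional flow-matching objective differ by a constant that does not depend on the vector field v (hence not on the network parameters θ). -/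
open MeasureTheory
open scoped RealInnerProductSpace

section Aux

variable {X : Type*} [MeasurableSpace X] {Z : Type*} [MeasurableSpace Z]
variable {E : Type*} [NormedAddCommGroup E] [InnerProductSpace ℝ E]
  [MeasurableSpace E] [BorelSpace E] [SecondCountableTopology E] [CompleteSpace E]

theorem fm_aux (μ : Measure X) [SigmaFinite μ] (q : Measure Z) [IsProbabilityMeasure q]
    (p : X → Z → ℝ)
    (hp_meas : Measurable fun xz : X × Z => p xz.1 xz.2)
    (hp_nonneg : ∀ x z, 0 ≤ p x z)
    (hp_prob : ∀ z, ∫ x, p x z ∂μ = 1)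
    (u : X → Z → E)
    (hu_meas : Measurable fun xz : X × Z => u xz.1 xz.2)
    (Cu : ℝ) (hu_bdd : ∀ x z, ‖u x z‖ ≤ Cu)
    (pbar : X → ℝ)
    (hpbar : ∀ x, pbar x = ∫ z, p x z ∂q)
    (hpbar_pos : ∀ x, 0 < pbar x)
    (ubar : X → E)
    (hubar : ∀ x, ubar x = (pbar x)⁻¹ • ∫ z, p x z • u x z ∂q)
    (v : X → E)
    (hv_meas : Measurable v)
    (Cv : ℝ) (hv_bdd : ∀ x, ‖v x‖ ≤ Cv) :
    (∫ x, ‖v x - ubar x‖ ^ 2 * pbar x ∂μ)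
      - (∫ z, (∫ x, ‖v x - u x z‖ ^ 2 * p x z ∂μ) ∂q)
    = (∫ x, ‖ubar x‖ ^ 2 * pbar x ∂μ)
      - (∫ z, (∫ x, ‖u x z‖ ^ 2 * p x z ∂μ) ∂q) := by
  classical
  obtain ⟨z₀⟩ : Nonempty Z := Measure.nonempty_of_neZero q
  have hX : Nonempty X := by
    by_contra h
    rw [not_nonempty_iff] at h
    have := hp_prob z₀
    simp [integral_of_isEmpty] at this
  obtain ⟨x₀⟩ := hX
  have hCu : 0 ≤ Cu := le_trans (norm_nonneg _) (hu_bdd x₀ z₀)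
  have hCv : 0 ≤ Cv := le_trans (norm_nonneg _) (hv_bdd x₀)
  -- basic integrability of p
  have hp_int_x : ∀ z, Integrable (fun x => p x z) μ := fun z =>
    integrable_of_integral_eq_one (hp_prob z)
  have hp_int_prod : Integrable (fun xz : X × Z => p xz.1 xz.2) (μ.prod q) := by
    rw [integrable_prod_iff' hp_meas.aestronglyMeasurable]
    refine ⟨Filter.Eventually.of_forall fun z => hp_int_x z, ?_⟩
    have : (fun z => ∫ x, ‖p x z‖ ∂μ) = fun _ => (1 : ℝ) := by
      funext z
      rw [show (fun x => ‖p x z‖) = fun x => p x z from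
        funext fun x => Real.norm_of_nonneg (hp_nonneg x z), hp_prob z]
    rw [this]
    exact integrable_const 1
  -- measurability of sections
  have hpz_meas : ∀ x, Measurable fun z => p x z :=
    fun x => hp_meas.comp (measurable_prodMk_left)
  have hpx_meas : ∀ z, Measurable fun x => p x z :=
    fun z => hp_meas.comp (measurable_prodMk_right)
  have huz_meas : ∀ x, Measurable fun z => u x z :=
    fun x => hu_meas.comp (measurable_prodMk_left)
  have hux_meas : ∀ z, Measurable fun x => u x z :=
    fun z => hu_meas.comp (measurable_prodMk_right)
  -- q-integrability of sections
  have hq_int_p : ∀ x, Integrable (fun z => p x z) q := by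
    intro x
    refine Integrable.of_integral_ne_zero ?_
    rw [← hpbar x]
    exact (hpbar_pos x).ne'
  have hq_int_pu : ∀ x, Integrable (fun z => p x z • u x z) q := by
    intro x
    refine ((hq_int_p x).const_mul Cu).mono'
      ((hpz_meas x).smul (huz_meas x)).aestronglyMeasurable
      (Filter.Eventually.of_forall fun z => ?_)
    rw [norm_smul, Real.norm_of_nonneg (hp_nonneg x z)]
    calc p x z * ‖u x z‖ ≤ p x z * Cu := by
          exact mul_le_mul_of_nonneg_left (hu_bdd x z) (hp_nonneg x z)
      _ = Cu * p x z := mul_comm _ _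
  -- pbar • ubar recovers the vector integral
  have hvec : ∀ x, pbar x • ubar x = ∫ z, p x z • u x z ∂q := by
    intro x
    rw [hubar x, smul_inv_smul₀ (hpbar_pos x).ne']
  -- ubar is bounded by Cu
  have hubar_bdd : ∀ x, ‖ubar x‖ ≤ Cu := by
    intro x
    rw [hubar x, norm_smul, Real.norm_of_nonneg (inv_nonneg.2 (hpbar_pos x).le)]
    have h1 : ‖∫ z, p x z • u x z ∂q‖ ≤ Cu * pbar x := by
      calc ‖∫ z, p x z • u x z ∂q‖ ≤ ∫ z, ‖p x z • u x z‖ ∂q :=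
            norm_integral_le_integral_norm _
        _ ≤ ∫ z, Cu * p x z ∂q := by
            refine integral_mono ((hq_int_pu x).norm) ((hq_int_p x).const_mul Cu) fun z => ?_
            rw [norm_smul, Real.norm_of_nonneg (hp_nonneg x z)]
            calc p x z * ‖u x z‖ ≤ p x z * Cu :=
                  mul_le_mul_of_nonneg_left (hu_bdd x z) (hp_nonneg x z)
              _ = Cu * p x z := mul_comm _ _
        _ = Cu * pbar x := by rw [integral_const_mul, ← hpbar x]
    calc (pbar x)⁻¹ * ‖∫ z, p x z • u x z ∂q‖
        ≤ (pbar x)⁻¹ * (Cu * pbar x) :=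
          mul_le_mul_of_nonneg_left h1 (inv_nonneg.2 (hpbar_pos x).le)
      _ = Cu := by
          rw [mul_comm Cu (pbar x), ← mul_assoc, inv_mul_cancel₀ (hpbar_pos x).ne', one_mul]
  -- measurability of pbar and ubar
  have hpbar_meas : Measurable pbar := by
    have : pbar = fun x => ∫ z, p x z ∂q := funext hpbar
    rw [this]
    exact (hp_meas.stronglyMeasurable.integral_prod_right').measurable
  have hpu_meas : Measurable fun xz : X × Z => p xz.1 xz.2 • u xz.1 xz.2 :=
    hp_meas.smul hu_meas
  have hubar_meas : Measurable ubar := by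
    have : ubar = fun x => (pbar x)⁻¹ • ∫ z, p x z • u x z ∂q := funext hubar
    rw [this]
    exact (hpbar_meas.inv).smul
      (hpu_meas.stronglyMeasurable.integral_prod_right').measurable
  -- integrability of pbar
  have hpbar_int : Integrable pbar μ := by
    have : pbar = fun x => ∫ z, p x z ∂q := funext hpbar
    rw [this]
    exact hp_int_prod.integral_prod_left
  -- the core function g
  set g : X × Z → ℝ :=
    fun xz => (‖v xz.1‖ ^ 2 - 2 * ⟪v xz.1, u xz.1 xz.2⟫) * p xz.1 xz.2 with hg_def
  have hg_meas : Measurable g := by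
    refine Measurable.mul ?_ hp_meas
    refine Measurable.sub ?_ ?_
    · exact ((hv_meas.comp measurable_fst).norm.pow measurable_const)
    · exact ((hv_meas.comp measurable_fst).inner hu_meas).const_mul 2
  have hg_bound : ∀ xz : X × Z, ‖g xz‖ ≤ (Cv ^ 2 + 2 * Cv * Cu) * p xz.1 xz.2 := by
    rintro ⟨x, z⟩
    rw [hg_def]
    simp only [Real.norm_eq_abs, abs_mul, abs_of_nonneg (hp_nonneg x z)]
    refine mul_le_mul_of_nonneg_right ?_ (hp_nonneg x z)
    have h1 : |⟪v x, u x z⟫| ≤ Cv * Cu := by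
      calc |⟪v x, u x z⟫| ≤ ‖v x‖ * ‖u x z‖ := abs_real_inner_le_norm _ _
        _ ≤ Cv * Cu := by
            exact mul_le_mul (hv_bdd x) (hu_bdd x z) (norm_nonneg _) hCv
    have h2 : ‖v x‖ ^ 2 ≤ Cv ^ 2 := by
      exact pow_le_pow_left₀ (norm_nonneg _) (hv_bdd x) 2
    have h3 := abs_sub (‖v x‖ ^ 2) (2 * ⟪v x, u x z⟫)
    calc |‖v x‖ ^ 2 - 2 * ⟪v x, u x z⟫|
        ≤ |‖v x‖ ^ 2| + |2 * ⟪v x, u x z⟫| := abs_sub _ _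
      _ ≤ Cv ^ 2 + 2 * Cv * Cu := by
          rw [abs_of_nonneg (by positivity : (0:ℝ) ≤ ‖v x‖ ^ 2), abs_mul]
          have : |(2:ℝ)| = 2 := by norm_num
          rw [this]
          linarith
  have hg_int : Integrable g (μ.prod q) := by
    refine (hp_int_prod.const_mul (Cv ^ 2 + 2 * Cv * Cu)).mono'
      hg_meas.aestronglyMeasurable (Filter.Eventually.of_forall fun xz => ?_)
    exact hg_bound xz
  -- z-integral of g for fixed x
  have hzint : ∀ x, ∫ z, g (x, z) ∂q
      = (‖v x - ubar x‖ ^ 2 - ‖ubar x‖ ^ 2) * pbar x := by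
    intro x
    have e1 : (fun z => g (x, z))
        = fun z => ‖v x‖ ^ 2 * p x z - 2 * ⟪v x, p x z • u x z⟫ := by
      funext z
      rw [hg_def]
      simp only [real_inner_smul_right]
      ring
    have i1 : Integrable (fun z => ‖v x‖ ^ 2 * p x z) q := (hq_int_p x).const_mul _
    have i2 : Integrable (fun z => ⟪v x, p x z • u x z⟫) q :=
      (hq_int_pu x).const_inner (v x)
    rw [e1, integral_sub i1 (i2.const_mul 2), integral_const_mul, integral_const_mul,
      integral_inner (hq_int_pu x) (v x), ← hpbar x, ← hvec x, real_inner_smul_right,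
      norm_sub_sq_real]
    ring
  -- x-integral of g for fixed z
  have hxint : ∀ z, ∫ x, g (x, z) ∂μ
      = (∫ x, ‖v x - u x z‖ ^ 2 * p x z ∂μ) - (∫ x, ‖u x z‖ ^ 2 * p x z ∂μ) := by
    intro z
    have e1 : (fun x => g (x, z))
        = fun x => ‖v x - u x z‖ ^ 2 * p x z - ‖u x z‖ ^ 2 * p x z := by
      funext x
      rw [hg_def]
      simp only [norm_sub_sq_real]
      ring
    have i1 : Integrable (fun x => ‖v x - u x z‖ ^ 2 * p x z) μ := by
      refine ((hp_int_x z).const_mul ((Cv + Cu) ^ 2)).mono'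
        (((hv_meas.sub (hux_meas z)).norm.pow measurable_const).mul
          (hpx_meas z)).aestronglyMeasurable
        (Filter.Eventually.of_forall fun x => ?_)
      rw [Real.norm_eq_abs, abs_mul, abs_of_nonneg (hp_nonneg x z),
        abs_of_nonneg (by positivity : (0:ℝ) ≤ ‖v x - u x z‖ ^ 2)]
      refine mul_le_mul_of_nonneg_right ?_ (hp_nonneg x z)
      refine pow_le_pow_left₀ (norm_nonneg _) ?_ 2
      calc ‖v x - u x z‖ ≤ ‖v x‖ + ‖u x z‖ := norm_sub_le _ _
        _ ≤ Cv + Cu := add_le_add (hv_bdd x) (hu_bdd x z)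
    have i2 : Integrable (fun x => ‖u x z‖ ^ 2 * p x z) μ := by
      refine ((hp_int_x z).const_mul (Cu ^ 2)).mono'
        (((hux_meas z).norm.pow measurable_const).mul
          (hpx_meas z)).aestronglyMeasurable
        (Filter.Eventually.of_forall fun x => ?_)
      rw [Real.norm_eq_abs, abs_mul, abs_of_nonneg (hp_nonneg x z),
        abs_of_nonneg (by positivity : (0:ℝ) ≤ ‖u x z‖ ^ 2)]
      exact mul_le_mul_of_nonneg_right
        (pow_le_pow_left₀ (norm_nonneg _) (hu_bdd x z) 2) (hp_nonneg x z)
    rw [e1, integral_sub i1 i2]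
  -- Fubini
  have hswap : ∫ x, (∫ z, g (x, z) ∂q) ∂μ = ∫ z, (∫ x, g (x, z) ∂μ) ∂q :=
    integral_integral_swap (by exact hg_int)
  -- left side via hzint
  have iL1 : Integrable (fun x => ‖v x - ubar x‖ ^ 2 * pbar x) μ := by
    refine (hpbar_int.const_mul ((Cv + Cu) ^ 2)).mono'
      (((hv_meas.sub hubar_meas).norm.pow measurable_const).mul
        hpbar_meas).aestronglyMeasurable
      (Filter.Eventually.of_forall fun x => ?_)
    rw [Real.norm_eq_abs, abs_mul, abs_of_nonneg (hpbar_pos x).le,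
      abs_of_nonneg (by positivity : (0:ℝ) ≤ ‖v x - ubar x‖ ^ 2)]
    refine mul_le_mul_of_nonneg_right ?_ (hpbar_pos x).le
    refine pow_le_pow_left₀ (norm_nonneg _) ?_ 2
    calc ‖v x - ubar x‖ ≤ ‖v x‖ + ‖ubar x‖ := norm_sub_le _ _
      _ ≤ Cv + Cu := add_le_add (hv_bdd x) (hubar_bdd x)
  have iL2 : Integrable (fun x => ‖ubar x‖ ^ 2 * pbar x) μ := by
    refine (hpbar_int.const_mul (Cu ^ 2)).mono'
      ((hubar_meas.norm.pow measurable_const).mul hpbar_meas).aestronglyMeasurable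
      (Filter.Eventually.of_forall fun x => ?_)
    rw [Real.norm_eq_abs, abs_mul, abs_of_nonneg (hpbar_pos x).le,
      abs_of_nonneg (by positivity : (0:ℝ) ≤ ‖ubar x‖ ^ 2)]
    exact mul_le_mul_of_nonneg_right
      (pow_le_pow_left₀ (norm_nonneg _) (hubar_bdd x) 2) (hpbar_pos x).le
  have hL : ∫ x, (∫ z, g (x, z) ∂q) ∂μ
      = (∫ x, ‖v x - ubar x‖ ^ 2 * pbar x ∂μ) - (∫ x, ‖ubar x‖ ^ 2 * pbar x ∂μ) := by
    rw [show (fun x => ∫ z, g (x, z) ∂q)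
        = fun x => ‖v x - ubar x‖ ^ 2 * pbar x - ‖ubar x‖ ^ 2 * pbar x from
      funext fun x => by rw [hzint x]; ring]
    exact integral_sub iL1 iL2
  -- right side via hxint
  have iR1 : Integrable (fun z => ∫ x, ‖v x - u x z‖ ^ 2 * p x z ∂μ) q := by
    refine (integrable_const ((Cv + Cu) ^ 2)).mono'
      ?_ (Filter.Eventually.of_forall fun z => ?_)
    · exact (((hv_meas.comp measurable_fst).sub hu_meas).norm.pow
        measurable_const).mul hp_meas
        |>.stronglyMeasurable.integral_prod_left'.aestronglyMeasurable
    · rw [Real.norm_eq_abs, abs_of_nonneg (integral_nonneg fun x => mul_nonneg (by positivity) (hp_nonneg x z))]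
      calc ∫ x, ‖v x - u x z‖ ^ 2 * p x z ∂μ
          ≤ ∫ x, (Cv + Cu) ^ 2 * p x z ∂μ := by
            refine integral_mono ?_ ((hp_int_x z).const_mul _) fun x => ?_
            · refine ((hp_int_x z).const_mul ((Cv + Cu) ^ 2)).mono'
                (((hv_meas.sub (hux_meas z)).norm.pow measurable_const).mul
                  (hpx_meas z)).aestronglyMeasurable
                (Filter.Eventually.of_forall fun x => ?_)
              rw [Real.norm_eq_abs, abs_mul, abs_of_nonneg (hp_nonneg x z),
                abs_of_nonneg (by positivity : (0:ℝ) ≤ ‖v x - u x z‖ ^ 2)]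
              refine mul_le_mul_of_nonneg_right ?_ (hp_nonneg x z)
              refine pow_le_pow_left₀ (norm_nonneg _) ?_ 2
              calc ‖v x - u x z‖ ≤ ‖v x‖ + ‖u x z‖ := norm_sub_le _ _
                _ ≤ Cv + Cu := add_le_add (hv_bdd x) (hu_bdd x z)
            · refine mul_le_mul_of_nonneg_right ?_ (hp_nonneg x z)
              refine pow_le_pow_left₀ (norm_nonneg _) ?_ 2
              calc ‖v x - u x z‖ ≤ ‖v x‖ + ‖u x z‖ := norm_sub_le _ _
                _ ≤ Cv + Cu := add_le_add (hv_bdd x) (hu_bdd x z)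
        _ = (Cv + Cu) ^ 2 := by rw [integral_const_mul, hp_prob z, mul_one]
  have iR2 : Integrable (fun z => ∫ x, ‖u x z‖ ^ 2 * p x z ∂μ) q := by
    refine (integrable_const (Cu ^ 2)).mono'
      ?_ (Filter.Eventually.of_forall fun z => ?_)
    · exact ((hu_meas.norm.pow measurable_const).mul hp_meas)
        |>.stronglyMeasurable.integral_prod_left'.aestronglyMeasurable
    · rw [Real.norm_eq_abs, abs_of_nonneg (integral_nonneg fun x => mul_nonneg (by positivity) (hp_nonneg x z))]
      calc ∫ x, ‖u x z‖ ^ 2 * p x z ∂μ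
          ≤ ∫ x, Cu ^ 2 * p x z ∂μ := by
            refine integral_mono ?_ ((hp_int_x z).const_mul _) fun x => ?_
            · refine ((hp_int_x z).const_mul (Cu ^ 2)).mono'
                (((hux_meas z).norm.pow measurable_const).mul
                  (hpx_meas z)).aestronglyMeasurable
                (Filter.Eventually.of_forall fun x => ?_)
              rw [Real.norm_eq_abs, abs_mul, abs_of_nonneg (hp_nonneg x z),
                abs_of_nonneg (by positivity : (0:ℝ) ≤ ‖u x z‖ ^ 2)]
              exact mul_le_mul_of_nonneg_right
                (pow_le_pow_left₀ (norm_nonneg _) (hu_bdd x z) 2) (hp_nonneg x z)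
            · exact mul_le_mul_of_nonneg_right
                (pow_le_pow_left₀ (norm_nonneg _) (hu_bdd x z) 2) (hp_nonneg x z)
        _ = Cu ^ 2 := by rw [integral_const_mul, hp_prob z, mul_one]
  have hR : ∫ z, (∫ x, g (x, z) ∂μ) ∂q
      = (∫ z, (∫ x, ‖v x - u x z‖ ^ 2 * p x z ∂μ) ∂q)
        - (∫ z, (∫ x, ‖u x z‖ ^ 2 * p x z ∂μ) ∂q) := by
    rw [show (fun z => ∫ x, g (x, z) ∂μ)
        = fun z => (∫ x, ‖v x - u x z‖ ^ 2 * p x z ∂μ)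
            - (∫ x, ‖u x z‖ ^ 2 * p x z ∂μ) from funext fun z => hxint z]
    exact integral_sub iR1 iR2
  have key := hL.symm.trans (hswap.trans hR)
  linarith

end Aux

/-- **Lemma 1 of the paper.** For a fixed generative condition `c`,
let `p(·|z,c)` be probability densities on `ℝ^d` (jointly measurable) and
`u(·|z,c)` bounded measurable conditional vector fields, mixed by a probability
measure `q` on `Z`.  With the marginal density `p(x|c) = ∫_Z p(x|z,c) dq(z)`
(assumed strictly positive) and the marginal vector field
`u(x|c) = (∫_Z u(x|z,c) p(x|z,c) dq(z)) / p(x|c)`, for every bounded measurable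
vector field `v` the marginal and conditional flow-matching objectives differ by
a constant independent of `v`:
`∫ ‖v − u(·|c)‖² p(·|c) − ∫∫ ‖v − u(·|z,c)‖² p(·|z,c) dq
  = ∫ ‖u(·|c)‖² p(·|c) − ∫∫ ‖u(·|z,c)‖² p(·|z,c) dq`. -/
theorem marginal_and_conditional_fm_objectives_differ_by_constant
    (d : ℕ) (hd : 0 < d)
    {Z : Type*} [MeasurableSpace Z] (q : Measure Z) [IsProbabilityMeasure q]
    (p : EuclideanSpace ℝ (Fin d) → Z → ℝ)
    (hp_meas : Measurable fun xz : EuclideanSpace ℝ (Fin d) × Z => p xz.1 xz.2)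
    (hp_nonneg : ∀ x z, 0 ≤ p x z)
    (hp_prob : ∀ z, ∫ x : EuclideanSpace ℝ (Fin d), p x z = 1)
    (u : EuclideanSpace ℝ (Fin d) → Z → EuclideanSpace ℝ (Fin d))
    (hu_meas : Measurable fun xz : EuclideanSpace ℝ (Fin d) × Z => u xz.1 xz.2)
    (Cu : ℝ) (hu_bdd : ∀ x z, ‖u x z‖ ≤ Cu)
    (pbar : EuclideanSpace ℝ (Fin d) → ℝ)
    (hpbar : ∀ x, pbar x = ∫ z, p x z ∂q)
    (hpbar_pos : ∀ x, 0 < pbar x)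
    (ubar : EuclideanSpace ℝ (Fin d) → EuclideanSpace ℝ (Fin d))
    (hubar : ∀ x, ubar x = (pbar x)⁻¹ • ∫ z, p x z • u x z ∂q)
    (v : EuclideanSpace ℝ (Fin d) → EuclideanSpace ℝ (Fin d))
    (hv_meas : Measurable v)
    (Cv : ℝ) (hv_bdd : ∀ x, ‖v x‖ ≤ Cv) :
    (∫ x : EuclideanSpace ℝ (Fin d), ‖v x - ubar x‖ ^ 2 * pbar x)
      - (∫ z, (∫ x : EuclideanSpace ℝ (Fin d), ‖v x - u x z‖ ^ 2 * p x z) ∂q)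
    = (∫ x : EuclideanSpace ℝ (Fin d), ‖ubar x‖ ^ 2 * pbar x)
      - (∫ z, (∫ x : EuclideanSpace ℝ (Fin d), ‖u x z‖ ^ 2 * p x z) ∂q) :=
  fm_aux volume q p hp_meas hp_nonneg hp_prob u hu_meas Cu hu_bdd pbar hpbar
    hpbar_pos ubar hubar v hv_meas Cv hv_bdd
end

section
/- Let d be a positive integer, let Z be a measurable space with a probability measure q, let p(·|z) be probability density functions on ℝ^d (measurable jointly in (x,z)), and let u(·|z) : ℝ^d → ℝ^d be bounded measurable conditional vector fields. Define the marginal density p(x) := ∫_Z p(x|z) dq(z), assume p(x) > 0 for all x, and define the marginal vector field u(x) := (∫_Z u(x|z) p(x|z) dq(z)) / p(x). Then for every bounded measurable vector field v : ℝ^d → ℝ^d, ∫_{ℝ^d} ⟨v(x), u(x)⟩ p(x) dx = ∫_Z ∫_{ℝ^d} ⟨v(x), u(x|z)⟩ p(x|z) dx dq(z). -/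
open MeasureTheory

/-- With conditional probability densities `p(·|z)` on `ℝ^d`,
bounded measurable conditional vector fields `u(·|z)`, mixing probability
measure `q`, marginal density `p(x) = ∫_Z p(x|z) dq(z)` assumed strictly
positive, and marginal vector field `u(x) = (∫_Z u(x|z) p(x|z) dq(z)) / p(x)`,
for every bounded measurable vector field `v` one has
`∫ ⟨v(x), u(x)⟩ p(x) dx = ∫_Z ∫ ⟨v(x), u(x|z)⟩ p(x|z) dx dq(z)`. -/
theorem inner_product_marginalization
    (d : ℕ) (hd : 0 < d)
    {Z : Type*} [MeasurableSpace Z] (q : Measure Z) [IsProbabilityMeasure q]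
    (p : EuclideanSpace ℝ (Fin d) → Z → ℝ)
    (hp_meas : Measurable fun xz : EuclideanSpace ℝ (Fin d) × Z => p xz.1 xz.2)
    (hp_nonneg : ∀ x z, 0 ≤ p x z)
    (hp_prob : ∀ z, ∫ x : EuclideanSpace ℝ (Fin d), p x z = 1)
    (u : EuclideanSpace ℝ (Fin d) → Z → EuclideanSpace ℝ (Fin d))
    (hu_meas : Measurable fun xz : EuclideanSpace ℝ (Fin d) × Z => u xz.1 xz.2)
    (Cu : ℝ) (hu_bdd : ∀ x z, ‖u x z‖ ≤ Cu)
    (pbar : EuclideanSpace ℝ (Fin d) → ℝ)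
    (hpbar : ∀ x, pbar x = ∫ z, p x z ∂q)
    (hpbar_pos : ∀ x, 0 < pbar x)
    (ubar : EuclideanSpace ℝ (Fin d) → EuclideanSpace ℝ (Fin d))
    (hubar : ∀ x, ubar x = (pbar x)⁻¹ • ∫ z, p x z • u x z ∂q)
    (v : EuclideanSpace ℝ (Fin d) → EuclideanSpace ℝ (Fin d))
    (hv_meas : Measurable v)
    (Cv : ℝ) (hv_bdd : ∀ x, ‖v x‖ ≤ Cv) :
    (∫ x : EuclideanSpace ℝ (Fin d), (inner ℝ (v x) (ubar x) : ℝ) * pbar x)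
      = (∫ z, (∫ x : EuclideanSpace ℝ (Fin d), (inner ℝ (v x) (u x z) : ℝ) * p x z) ∂q) := by
  classical
  have hZ : Nonempty Z := by
    rcases isEmpty_or_nonempty Z with h | h
    · exfalso
      have h1 : q Set.univ = 1 := measure_univ
      rw [Set.univ_eq_empty_iff.mpr h] at h1
      simp at h1
    · exact h
  obtain ⟨z₀⟩ := hZ
  have hCu : 0 ≤ Cu := le_trans (norm_nonneg _) (hu_bdd 0 z₀)
  have hCv : 0 ≤ Cv := le_trans (norm_nonneg _) (hv_bdd 0)
  -- measurability of slices
  have hp_meas_x : ∀ x, Measurable fun z => p x z := fun x =>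
    hp_meas.comp (measurable_prodMk_left)
  have hp_meas_z : ∀ z, Measurable fun x => p x z := fun z =>
    hp_meas.comp (measurable_prodMk_right)
  have hu_meas_x : ∀ x, Measurable fun z => u x z := fun x =>
    hu_meas.comp (measurable_prodMk_left)
  -- integrability of z ↦ p x z
  have hpz_int : ∀ x, Integrable (fun z => p x z) q := by
    intro x
    by_contra h
    have h0 : ∫ z, p x z ∂q = 0 := integral_undef h
    have := hpbar_pos x
    rw [hpbar x, h0] at this
    exact lt_irrefl _ this
  -- integrability of x ↦ p x z
  have hpx_int : ∀ z, Integrable (fun x => p x z) (volume : Measure (EuclideanSpace ℝ (Fin d))) := by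
    intro z
    by_contra h
    have h0 : ∫ x, p x z = 0 := integral_undef h
    rw [hp_prob z] at h0
    norm_num at h0
  -- integrability of z ↦ p x z • u x z
  have hpu_int : ∀ x, Integrable (fun z => p x z • u x z) q := by
    intro x
    refine ((hpz_int x).const_mul Cu).mono ((hp_meas_x x).smul (hu_meas_x x)).aestronglyMeasurable ?_
    filter_upwards with z
    rw [norm_smul, Real.norm_eq_abs, abs_of_nonneg (hp_nonneg x z),
      Real.norm_eq_abs, abs_of_nonneg (mul_nonneg hCu (hp_nonneg x z))]
    calc p x z * ‖u x z‖ ≤ p x z * Cu := by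
          exact mul_le_mul_of_nonneg_left (hu_bdd x z) (hp_nonneg x z)
      _ = Cu * p x z := mul_comm _ _
  -- pointwise identity
  have key : ∀ x, (inner ℝ (v x) (ubar x) : ℝ) * pbar x
      = ∫ z, (inner ℝ (v x) (u x z) : ℝ) * p x z ∂q := by
    intro x
    rw [hubar x, inner_smul_right, ← integral_inner (hpu_int x)]
    have hne : pbar x ≠ 0 := (hpbar_pos x).ne'
    rw [mul_comm, ← mul_assoc, mul_inv_cancel₀ hne, one_mul]
    congr 1
    ext z
    rw [inner_smul_right, mul_comm]
  -- integrability of p on product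
  have hp_prod_int : Integrable (fun xz : EuclideanSpace ℝ (Fin d) × Z => p xz.1 xz.2)
      ((volume : Measure (EuclideanSpace ℝ (Fin d))).prod q) := by
    refine ⟨hp_meas.aestronglyMeasurable, ?_⟩
    rw [hasFiniteIntegral_iff_ofReal (Filter.Eventually.of_forall fun (xz : EuclideanSpace ℝ (Fin d) × Z) => hp_nonneg xz.1 xz.2)]
    have hmeas : AEMeasurable (fun xz : EuclideanSpace ℝ (Fin d) × Z =>
        ENNReal.ofReal (p xz.1 xz.2)) ((volume : Measure (EuclideanSpace ℝ (Fin d))).prod q) :=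
      (ENNReal.measurable_ofReal.comp hp_meas).aemeasurable
    rw [lintegral_prod_symm _ hmeas]
    have : ∀ z, ∫⁻ x, ENNReal.ofReal (p x z) = 1 := by
      intro z
      rw [← ofReal_integral_eq_lintegral_ofReal (hpx_int z)
        (Filter.Eventually.of_forall fun x => hp_nonneg x z), hp_prob z]
      simp
    simp only [this]
    simp
  -- integrability of the full integrand on the product
  have hf_meas : Measurable (fun xz : EuclideanSpace ℝ (Fin d) × Z =>
      (inner ℝ (v xz.1) (u xz.1 xz.2) : ℝ) * p xz.1 xz.2) :=
    ((hv_meas.comp measurable_fst).inner hu_meas).mul hp_meas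
  have hf_int : Integrable (fun xz : EuclideanSpace ℝ (Fin d) × Z =>
      (inner ℝ (v xz.1) (u xz.1 xz.2) : ℝ) * p xz.1 xz.2)
      ((volume : Measure (EuclideanSpace ℝ (Fin d))).prod q) := by
    refine (hp_prod_int.const_mul (Cv * Cu)).mono hf_meas.aestronglyMeasurable ?_
    filter_upwards with xz
    rw [Real.norm_eq_abs, Real.norm_eq_abs, abs_mul, abs_of_nonneg (hp_nonneg xz.1 xz.2),
      abs_of_nonneg (mul_nonneg (mul_nonneg hCv hCu) (hp_nonneg xz.1 xz.2))]
    refine mul_le_mul_of_nonneg_right ?_ (hp_nonneg xz.1 xz.2)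
    calc |(inner ℝ (v xz.1) (u xz.1 xz.2) : ℝ)| ≤ ‖v xz.1‖ * ‖u xz.1 xz.2‖ := abs_real_inner_le_norm _ _
      _ ≤ Cv * Cu := mul_le_mul (hv_bdd _) (hu_bdd _ _) (norm_nonneg _) hCv
  calc (∫ x : EuclideanSpace ℝ (Fin d), (inner ℝ (v x) (ubar x) : ℝ) * pbar x)
      = ∫ x : EuclideanSpace ℝ (Fin d), ∫ z, (inner ℝ (v x) (u x z) : ℝ) * p x z ∂q := by
        exact integral_congr_ae (Filter.Eventually.of_forall key)
    _ = ∫ z, (∫ x : EuclideanSpace ℝ (Fin d), (inner ℝ (v x) (u x z) : ℝ) * p x z) ∂q :=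
        integral_integral_swap hf_int
end

section
/- Let p and d be positive integers, let μ be a probability measure on a measurable space Y, and let u : Y → ℝ^d be a bounded measurable function. Let c₁, c₂ be two conditions and, for i ∈ {1,2}, let vᵢ : Y → ℝ^d and Dᵢ : Y → (ℝ^p → ℝ^d continuous linear maps) be measurable, interpreted as the velocity estimator and its parameter-Jacobian at a fixed parameter θ under condition cᵢ. Suppose there are nonnegative constants M, D, K, ε such that for all y ∈ Y and i ∈ {1,2}: ‖Dᵢ(y)‖ ≤ M (operator norm), ‖vᵢ(y) − u(y)‖ ≤ D, ‖v₁(y) − v₂(y)‖ ≤ ε, and ‖D₁(y) − D₂(y)‖ ≤ K ‖v₁(y) − v₂(y)‖. Define the loss gradients Gᵢ := 2 ∫_Y (Dᵢ(y))^* (vᵢ(y) − u(y)) dμ(y) ∈ ℝ^p, where (·)^* is the Euclidean adjoint. Then ‖G₁ − G₂‖ ≤ 2 (M + K·D) ε. -/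
open MeasureTheory

/-- **Theorem 2 of the paper, gradient contraction under
independent sampling.** For two conditions `c₁, c₂`, with velocity estimators
`v₁, v₂ : Y → ℝ^d` and parameter-Jacobians `D₁, D₂ : Y → (ℝ^p →L ℝ^d)` at a
fixed parameter, under the uniform bounds `‖Dᵢ(y)‖ ≤ M`, `‖vᵢ(y) − u(y)‖ ≤ D`,
`‖v₁(y) − v₂(y)‖ ≤ ε` and the output-sensitive Lipschitz condition
`‖D₁(y) − D₂(y)‖ ≤ K ‖v₁(y) − v₂(y)‖`, the loss gradients
`Gᵢ = 2 ∫ (Dᵢ(y))^* (vᵢ(y) − u(y)) dμ(y)` satisfy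
`‖G₁ − G₂‖ ≤ 2 (M + K·D) ε`. -/
theorem gradient_contraction_under_independent_sampling
    (p d : ℕ) (hp : 0 < p) (hd : 0 < d)
    {Y : Type*} [MeasurableSpace Y] (μ : Measure Y) [IsProbabilityMeasure μ]
    (u : Y → EuclideanSpace ℝ (Fin d))
    (hu_meas : Measurable u)
    (Cu : ℝ) (hu_bdd : ∀ y, ‖u y‖ ≤ Cu)
    (v₁ v₂ : Y → EuclideanSpace ℝ (Fin d))
    (D₁ D₂ : Y → (EuclideanSpace ℝ (Fin p) →L[ℝ] EuclideanSpace ℝ (Fin d)))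
    (hv₁_meas : Measurable v₁) (hv₂_meas : Measurable v₂)
    (hD₁_meas : StronglyMeasurable D₁) (hD₂_meas : StronglyMeasurable D₂)
    (M D K ε : ℝ) (hM : 0 ≤ M) (hD : 0 ≤ D) (hK : 0 ≤ K) (hε : 0 ≤ ε)
    (hD₁_bdd : ∀ y, ‖D₁ y‖ ≤ M) (hD₂_bdd : ∀ y, ‖D₂ y‖ ≤ M)
    (hres₁ : ∀ y, ‖v₁ y - u y‖ ≤ D) (hres₂ : ∀ y, ‖v₂ y - u y‖ ≤ D)
    (hclose : ∀ y, ‖v₁ y - v₂ y‖ ≤ ε)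
    (hLip : ∀ y, ‖D₁ y - D₂ y‖ ≤ K * ‖v₁ y - v₂ y‖) :
    ‖((2 : ℝ) • ∫ y, (ContinuousLinearMap.adjoint (D₁ y)) (v₁ y - u y) ∂μ)
      - ((2 : ℝ) • ∫ y, (ContinuousLinearMap.adjoint (D₂ y)) (v₂ y - u y) ∂μ)‖
      ≤ 2 * (M + K * D) * ε := by
  set f₁ : Y → EuclideanSpace ℝ (Fin p) :=
    fun y => (ContinuousLinearMap.adjoint (D₁ y)) (v₁ y - u y) with hf₁
  set f₂ : Y → EuclideanSpace ℝ (Fin p) :=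
    fun y => (ContinuousLinearMap.adjoint (D₂ y)) (v₂ y - u y) with hf₂
  have hmeas : ∀ (Dm : Y → (EuclideanSpace ℝ (Fin p) →L[ℝ] EuclideanSpace ℝ (Fin d)))
      (vm : Y → EuclideanSpace ℝ (Fin d)), StronglyMeasurable Dm → Measurable vm →
      StronglyMeasurable (fun y => (ContinuousLinearMap.adjoint (Dm y)) (vm y - u y)) := by
    intro Dm vm hDm hvm
    have h1 : StronglyMeasurable (fun y => ContinuousLinearMap.adjoint (Dm y)) :=
      (LinearIsometryEquiv.continuous _).comp_stronglyMeasurable hDm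
    have h2 : StronglyMeasurable (fun y => vm y - u y) :=
      (hvm.sub hu_meas).stronglyMeasurable
    have h3 : StronglyMeasurable (fun y =>
        ((ContinuousLinearMap.adjoint (Dm y)), vm y - u y)) := h1.prodMk h2
    exact (isBoundedBilinearMap_apply.continuous).comp_stronglyMeasurable h3
  have hint : ∀ (Dm : Y → (EuclideanSpace ℝ (Fin p) →L[ℝ] EuclideanSpace ℝ (Fin d)))
      (vm : Y → EuclideanSpace ℝ (Fin d)), StronglyMeasurable Dm → Measurable vm →
      (∀ y, ‖Dm y‖ ≤ M) → (∀ y, ‖vm y - u y‖ ≤ D) →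
      Integrable (fun y => (ContinuousLinearMap.adjoint (Dm y)) (vm y - u y)) μ := by
    intro Dm vm hDm hvm hDb hvb
    refine Integrable.mono' (integrable_const (M * D)) ((hmeas Dm vm hDm hvm).aestronglyMeasurable)
      (Filter.Eventually.of_forall fun y => ?_)
    calc ‖(ContinuousLinearMap.adjoint (Dm y)) (vm y - u y)‖
        ≤ ‖ContinuousLinearMap.adjoint (Dm y)‖ * ‖vm y - u y‖ :=
          ContinuousLinearMap.le_opNorm _ _
      _ ≤ M * D := by
          have : ‖ContinuousLinearMap.adjoint (Dm y)‖ = ‖Dm y‖ :=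
            LinearIsometryEquiv.norm_map _ _
          rw [this]
          exact mul_le_mul (hDb y) (hvb y) (norm_nonneg _) hM
  have hi₁ := hint D₁ v₁ hD₁_meas hv₁_meas hD₁_bdd hres₁
  have hi₂ := hint D₂ v₂ hD₂_meas hv₂_meas hD₂_bdd hres₂
  have hpt : ∀ y, ‖f₁ y - f₂ y‖ ≤ (M + K * D) * ε := by
    intro y
    have hdecomp : f₁ y - f₂ y =
        (ContinuousLinearMap.adjoint (D₁ y)) (v₁ y - v₂ y)
          + (ContinuousLinearMap.adjoint (D₁ y - D₂ y)) (v₂ y - u y) := by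
      simp only [hf₁, hf₂, map_sub, ContinuousLinearMap.sub_apply]
      abel
    have h1 : ‖(ContinuousLinearMap.adjoint (D₁ y)) (v₁ y - v₂ y)‖ ≤ M * ε := by
      calc ‖(ContinuousLinearMap.adjoint (D₁ y)) (v₁ y - v₂ y)‖
          ≤ ‖ContinuousLinearMap.adjoint (D₁ y)‖ * ‖v₁ y - v₂ y‖ :=
            ContinuousLinearMap.le_opNorm _ _
        _ ≤ M * ε := by
            rw [LinearIsometryEquiv.norm_map]
            exact mul_le_mul (hD₁_bdd y) (hclose y) (norm_nonneg _) hM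
    have h2 : ‖(ContinuousLinearMap.adjoint (D₁ y - D₂ y)) (v₂ y - u y)‖ ≤ K * D * ε := by
      calc ‖(ContinuousLinearMap.adjoint (D₁ y - D₂ y)) (v₂ y - u y)‖
          ≤ ‖ContinuousLinearMap.adjoint (D₁ y - D₂ y)‖ * ‖v₂ y - u y‖ :=
            ContinuousLinearMap.le_opNorm _ _
        _ ≤ (K * ε) * D := by
            rw [LinearIsometryEquiv.norm_map]
            refine mul_le_mul ?_ (hres₂ y) (norm_nonneg _) (by positivity)
            exact (hLip y).trans (by nlinarith [hclose y, norm_nonneg (v₁ y - v₂ y)])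
        _ = K * D * ε := by ring
    calc ‖f₁ y - f₂ y‖ ≤ ‖(ContinuousLinearMap.adjoint (D₁ y)) (v₁ y - v₂ y)‖
          + ‖(ContinuousLinearMap.adjoint (D₁ y - D₂ y)) (v₂ y - u y)‖ := by
          rw [hdecomp]; exact norm_add_le _ _
      _ ≤ M * ε + K * D * ε := add_le_add h1 h2
      _ = (M + K * D) * ε := by ring
  rw [← smul_sub, norm_smul, ← integral_sub hi₁ hi₂]
  have hnorm : ‖∫ y, (f₁ y - f₂ y) ∂μ‖ ≤ (M + K * D) * ε := by
    calc ‖∫ y, (f₁ y - f₂ y) ∂μ‖ ≤ ∫ y, ‖f₁ y - f₂ y‖ ∂μ := norm_integral_le_integral_norm _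
      _ ≤ ∫ _, (M + K * D) * ε ∂μ := by
          refine integral_mono_of_nonneg (Filter.Eventually.of_forall fun y => norm_nonneg _)
            (integrable_const _) (Filter.Eventually.of_forall hpt)
      _ = (M + K * D) * ε := by simp
  calc ‖(2:ℝ)‖ * ‖∫ y, (f₁ y - f₂ y) ∂μ‖ ≤ 2 * ((M + K * D) * ε) := by
        rw [Real.norm_ofNat]
        exact mul_le_mul_of_nonneg_left hnorm (by norm_num)
    _ = 2 * (M + K * D) * ε := by ring
end

section
/- Let p and d be positive integers. For every B > 0 there exist: points a, b in ℝ^d, the Dirac probability measures μ₁ = δ_a and μ₂ = δ_b on ℝ^d, a bounded measurable target u : ℝ^d → ℝ^d, and a bounded measurable velocity estimator v : ℝ^d → ℝ^d with bounded measurable parameter-Jacobian Dv : ℝ^d → (ℝ^p → ℝ^d continuous linear maps) that is the same for both conditions (so the hypothesis ‖v(y,c₁) − v(y,c₂)‖ ≤ ε holds for every ε ≥ 0, in particular ε = 0), such that ‖G₁ − G₂‖ > B, where Gᵢ := 2 ∫ (Dv(y))^* (v(y) − u(y)) dμᵢ(y). Consequently, under condition-dependent sampling measures, no bound on the gradient difference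 depending only on ε (such as 2(M + K D)ε) can hold without additional coupling assumptions on the conditional source distribution. -/
set_option maxHeartbeats 800000


open MeasureTheory

/-- **second part of the paper's Theorem 2.** Under
condition-dependent (Dirac) sampling measures `μ₁ = δ_a`, `μ₂ = δ_b` on `ℝ^d`,
even when the velocity estimator `v` and its parameter-Jacobian `Dv` are the
same for both conditions (so the output gap `ε` is `0`), the difference of the
loss gradients `Gᵢ = 2 ∫ (Dv(y))^* (v(y) − u(y)) dμᵢ(y)` can be made larger
than any prescribed bound `B`: no bound depending only on `ε` can hold. -/
theorem gradient_difference_unbounded_under_conditional_sampling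
    (p d : ℕ) (hp : 0 < p) (hd : 0 < d) :
    ∀ B > (0 : ℝ),
      ∃ (a b : EuclideanSpace ℝ (Fin d))
        (u v : EuclideanSpace ℝ (Fin d) → EuclideanSpace ℝ (Fin d))
        (Dv : EuclideanSpace ℝ (Fin d) →
          (EuclideanSpace ℝ (Fin p) →L[ℝ] EuclideanSpace ℝ (Fin d)))
        (Cu Cv CD : ℝ),
        Measurable u ∧ (∀ y, ‖u y‖ ≤ Cu) ∧
        Measurable v ∧ (∀ y, ‖v y‖ ≤ Cv) ∧
        StronglyMeasurable Dv ∧ (∀ y, ‖Dv y‖ ≤ CD) ∧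
        B < ‖((2 : ℝ) • ∫ y, (ContinuousLinearMap.adjoint (Dv y)) (v y - u y)
                ∂(Measure.dirac a))
            - ((2 : ℝ) • ∫ y, (ContinuousLinearMap.adjoint (Dv y)) (v y - u y)
                ∂(Measure.dirac b))‖ := by
  intro B hB
  set E := EuclideanSpace ℝ (Fin d)
  set P := EuclideanSpace ℝ (Fin p)
  -- unit vectors
  set e : P := EuclideanSpace.single ⟨0, hp⟩ (1 : ℝ) with he
  set f : E := EuclideanSpace.single ⟨0, hd⟩ (1 : ℝ) with hf
  have hfe : ‖f‖ = 1 := by rw [hf, EuclideanSpace.norm_single]; norm_num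
  have hee : ‖e‖ = 1 := by rw [he, EuclideanSpace.norm_single]; norm_num
  have hfne : f ≠ 0 := by
    intro h
    have := congrArg (fun z => ‖z‖) h
    simp [hfe] at this
  -- rank-one map L x = ⟪e, x⟫ • f
  set L : P →L[ℝ] E := (innerSL ℝ e).smulRight f with hL
  have hLe : L e = f := by
    have : (inner ℝ e e : ℝ) = 1 := by
      rw [real_inner_self_eq_norm_sq, hee]; norm_num
    simp [hL, ContinuousLinearMap.smulRight_apply, innerSL_apply_apply, this, hee]
  set a : E := 0
  set b : E := f
  have hab : b ≠ a := hfne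
  set c : E := B • f with hc
  set u : E → E := Set.indicator {a} (fun _ => -c) with hu
  set v : E → E := fun _ => 0 with hv
  set Dv : E → (P →L[ℝ] E) := fun _ => L with hDv
  refine ⟨a, b, u, v, Dv, ‖c‖, 0, ‖L‖, ?_, ?_, measurable_const, ?_, stronglyMeasurable_const, ?_, ?_⟩
  · exact measurable_const.indicator (measurableSet_singleton a)
  · intro y
    by_cases hy : y ∈ ({a} : Set E)
    · rw [hu, Set.indicator_of_mem hy]; simp
    · rw [hu, Set.indicator_of_notMem hy]; simp; exact norm_nonneg c
  · intro y; simp [hv]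
  · intro y; simp [hDv]
  -- compute the integrals over Dirac measures
  have hint : ∀ z : E, (∫ y, (ContinuousLinearMap.adjoint (Dv y)) (v y - u y)
      ∂(Measure.dirac z)) = (ContinuousLinearMap.adjoint L) (v z - u z) := by
    intro z
    exact integral_dirac (fun y => (ContinuousLinearMap.adjoint (Dv y)) (v y - u y)) z
  rw [hint a, hint b]
  have hua : u a = -c := by simp [hu]
  have hub : u b = 0 := by
    simp only [hu]
    rw [Set.indicator_of_notMem]
    simpa [Set.mem_singleton_iff] using hab
  rw [hua, hub]
  simp only [hv, zero_sub, neg_neg, sub_zero, map_zero, smul_zero, sub_zero]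
  -- now goal: B < ‖(2:ℝ) • (adjoint L) c‖
  have hadj : (inner ℝ ((ContinuousLinearMap.adjoint L) f) e : ℝ) = 1 := by
    rw [ContinuousLinearMap.adjoint_inner_left, hLe, real_inner_self_eq_norm_sq, hfe]
    norm_num
  have hlow : (1 : ℝ) ≤ ‖(ContinuousLinearMap.adjoint L) f‖ := by
    have h := real_inner_le_norm ((ContinuousLinearMap.adjoint L) f) e
    rw [hadj, hee, mul_one] at h
    exact h
  have hcalc : ‖(2 : ℝ) • (ContinuousLinearMap.adjoint L) c‖
      = 2 * B * ‖(ContinuousLinearMap.adjoint L) f‖ := by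
    rw [hc, ContinuousLinearMap.map_smul, smul_smul, norm_smul]
    rw [Real.norm_eq_abs, abs_of_pos (by linarith : (0:ℝ) < 2 * B)]
  convert_to B < ‖(2 : ℝ) • (ContinuousLinearMap.adjoint L) c‖ using 4
  · exact neg_neg c
  rw [hcalc]
  nlinarith [hlow]
end

section
/- Let d be a positive integer and let Z be a measurable space with a probability measure q. Let p : ℝ × ℝ^d × Z → ℝ be nonnegative with p(·,·,z) continuously differentiable for q-a.e. z, and let u : ℝ × ℝ^d × Z → ℝ^d be such that each p(t,·,z)·u(t,·,z) is continuously differentiable. Suppose that for q-a.e. z and all (t,x), the conditional continuity equation holds: ∂_t p(t,x,z) = − ∑_{i=1}^d ∂_{x_i} ( p(t,x,z) u_i(t,x,z) ). Define the marginal density p̄(t,x) := ∫_Z p(t,x,z) dq(z), assume p̄(t,x) > 0 for all (t,x), and define the marginal vector field ū(t,x) := ( ∫_Z u(t,x,z) p(t,x,z) dq(z) ) / p̄(t,x). Assume differentiation under the integral sign is valid, i.e. ∂_t ∫_Z p(t,x,z) dq(z) = ∫_Z ∂_t p(t,x,z) dq(z) and ∂_{x_i} ∫_Z p(t,x,z)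 u_i(t,x,z) dq(z) = ∫_Z ∂_{x_i}( p(t,x,z) u_i(t,x,z) ) dq(z) for each i. Then the marginal pair satisfies the continuity equation: ∂_t p̄(t,x) = − ∑_{i=1}^d ∂_{x_i} ( p̄(t,x) ū_i(t,x) ) for all (t,x). -/
open MeasureTheory

/-- If for `q`-a.e. `z` the conditional probability path
`p(t,·,z)` and conditional vector field `u(t,·,z)` satisfy the continuity
equation `∂_t p = −∑_i ∂_{x_i}(p uᵢ)`, then the marginal density
`p̄(t,x) = ∫_Z p(t,x,z) dq(z)` (assumed strictly positive) and the marginal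
vector field `ū(t,x) = (∫_Z u(t,x,z) p(t,x,z) dq(z)) / p̄(t,x)` satisfy the
continuity equation `∂_t p̄ = −∑_i ∂_{x_i}(p̄ ūᵢ)`, provided differentiation
under the integral sign is valid. -/
theorem marginal_continuity_equation
    (d : ℕ) (hd : 0 < d)
    {Z : Type*} [MeasurableSpace Z] (q : Measure Z) [IsProbabilityMeasure q]
    (p : ℝ → EuclideanSpace ℝ (Fin d) → Z → ℝ)
    (u : ℝ → EuclideanSpace ℝ (Fin d) → Z → EuclideanSpace ℝ (Fin d))
    (hp_nonneg : ∀ t x z, 0 ≤ p t x z)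
    (hp_smooth : ∀ᵐ z ∂q,
      ContDiff ℝ 1 (fun tx : ℝ × EuclideanSpace ℝ (Fin d) => p tx.1 tx.2 z))
    (hpu_smooth : ∀ z t, ContDiff ℝ 1 (fun x => p t x z • u t x z))
    -- conditional continuity equation, for `q`-a.e. `z`:
    (hcont : ∀ᵐ z ∂q, ∀ t x,
      deriv (fun s => p s x z) t
        = - ∑ i : Fin d,
            fderiv ℝ (fun y => p t y z * u t y z i) x (EuclideanSpace.single i 1))
    -- marginal density and marginal vector field:
    (pbar : ℝ → EuclideanSpace ℝ (Fin d) → ℝ)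
    (hpbar : ∀ t x, pbar t x = ∫ z, p t x z ∂q)
    (hpbar_pos : ∀ t x, 0 < pbar t x)
    (hpu_int : ∀ t x, Integrable (fun z => p t x z • u t x z) q)
    (ubar : ℝ → EuclideanSpace ℝ (Fin d) → EuclideanSpace ℝ (Fin d))
    (hubar : ∀ t x, ubar t x = (pbar t x)⁻¹ • ∫ z, p t x z • u t x z ∂q)
    -- differentiation under the integral sign is valid:
    (hswap_t : ∀ t x,
      deriv (fun s => ∫ z, p s x z ∂q) t = ∫ z, deriv (fun s => p s x z) t ∂q)
    (hswap_x : ∀ t x (i : Fin d),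
      fderiv ℝ (fun y => ∫ z, p t y z * u t y z i ∂q) x (EuclideanSpace.single i 1)
        = ∫ z, fderiv ℝ (fun y => p t y z * u t y z i) x (EuclideanSpace.single i 1) ∂q)
    (hfderiv_int : ∀ t x (i : Fin d),
      Integrable
        (fun z => fderiv ℝ (fun y => p t y z * u t y z i) x (EuclideanSpace.single i 1))
        q) :
    ∀ t x, deriv (fun s => pbar s x) t
      = - ∑ i : Fin d,
          fderiv ℝ (fun y => pbar t y * ubar t y i) x (EuclideanSpace.single i 1) := by
  intro t x
  -- key pointwise identity: pbar t y * ubar t y i = ∫ z, p t y z * u t y z i ∂q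
  have key : ∀ (y : EuclideanSpace ℝ (Fin d)) (i : Fin d),
      pbar t y * ubar t y i = ∫ z, p t y z * u t y z i ∂q := by
    intro y i
    have h1 : (∫ z, p t y z • u t y z ∂q) i = ∫ z, p t y z * u t y z i ∂q := by
      have := (EuclideanSpace.proj i :
          EuclideanSpace ℝ (Fin d) →L[ℝ] ℝ).integral_comp_comm (hpu_int t y)
      simpa [PiLp.smul_apply, smul_eq_mul] using this.symm
    rw [hubar t y]
    rw [PiLp.smul_apply, smul_eq_mul, ← mul_assoc,
      mul_inv_cancel₀ (hpbar_pos t y).ne', one_mul, h1]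
  have hLHS : deriv (fun s => pbar s x) t = ∫ z, deriv (fun s => p s x z) t ∂q := by
    have : (fun s => pbar s x) = fun s => ∫ z, p s x z ∂q := funext fun s => hpbar s x
    rw [this, hswap_t t x]
  rw [hLHS]
  have hI : ∫ z, deriv (fun s => p s x z) t ∂q
      = ∫ z, (- ∑ i : Fin d,
          fderiv ℝ (fun y => p t y z * u t y z i) x (EuclideanSpace.single i 1)) ∂q := by
    apply integral_congr_ae
    filter_upwards [hcont] with z hz
    exact hz t x
  rw [hI, integral_neg,
    integral_finset_sum _ (fun i _ => hfderiv_int t x i)]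
  congr 1
  apply Finset.sum_congr rfl
  intro i _
  have hfun : (fun y => pbar t y * ubar t y i)
      = fun y => ∫ z, p t y z * u t y z i ∂q := funext fun y => key y i
  rw [hfun, hswap_x t x i]
end
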